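/- Let u and its m-th derivative D^m u belong to L²(0,L), with m a positive integer. Then for every integer i with 0 ≤ i < m there exist constants A₁, A₂ depending only on L, m, i such that ‖D^i u‖_{L²(0,L)} ≤ A₁‖D^m u‖^{i/m}_{L²(0,L)}·‖u‖^{1−i/m}_{L²(0,L)} + A₂‖u‖_{L²(0,L)}. -/

import Mathlib

open MeasureTheory Set

lemma contSqInt (f : ℝ → ℝ) (hf : Continuous f) (a b : ℝ) :
    IntegrableOn (fun x => f x ^ 2) (Ioo a b) :=
  ((hf.pow 2).integrableOn_Icc (a := a) (b := b)).mono_set Ioo_subset_Icc_self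

lemma exists_small (f : ℝ → ℝ) (hf : Continuous f) {a b c d : ℝ} (hcd : c < d)
    (hsub : Ioo c d ⊆ Ioo a b) :
    ∃ p ∈ Ioo c d, f p ^ 2 * (d - c) ≤ ∫ x in Ioo a b, f x ^ 2 := by
  by_contra hcon
  push_neg at hcon
  set M : ℝ := ∫ x in Ioo a b, f x ^ 2 with hM
  have hpos : ∀ x ∈ Ioo c d, 0 < f x ^ 2 - M / (d - c) := by
    intro x hx
    have := hcon x hx
    have hdc : 0 < d - c := by linarith
    have h2 : M / (d - c) < f x ^ 2 := (div_lt_iff₀ hdc).2 (by linarith)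
    linarith
  have hii : IntervalIntegrable (fun x => f x ^ 2 - M / (d - c)) volume c d :=
    ((hf.pow 2).sub continuous_const).intervalIntegrable c d
  have h1 : 0 < ∫ x in c..d, (f x ^ 2 - M / (d - c)) :=
    intervalIntegral.intervalIntegral_pos_of_pos_on hii hpos hcd
  have h2 : ∫ x in c..d, (f x ^ 2 - M / (d - c)) =
      (∫ x in Ioo c d, f x ^ 2) - M := by
    rw [intervalIntegral.integral_of_le hcd.le, integral_Ioc_eq_integral_Ioo,
      integral_sub (contSqInt f hf c d) (integrableOn_const measure_Ioo_lt_top.ne)]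
    have : ∫ _ in Ioo c d, M / (d - c) = M / (d - c) * (d - c) := by
      simp [Real.volume_Ioo, ENNReal.toReal_ofReal (sub_nonneg.2 hcd.le), mul_comm, hcd.le]
    rw [this, div_mul_cancel₀]
    linarith
  have h3 : (∫ x in Ioo c d, f x ^ 2) ≤ M := by
    rw [hM]
    refine setIntegral_mono_set (contSqInt f hf a b) ?_ (HasSubset.Subset.eventuallyLE hsub)
    filter_upwards with x using sq_nonneg _
  linarith

lemma cs_L1_L2 (g : ℝ → ℝ) (hg : Continuous g) {a b : ℝ} (hab : a < b) :
    (∫ x in Ioo a b, |g x|) ^ 2 ≤ (b - a) * ∫ x in Ioo a b, g x ^ 2 := by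
  set l : ℝ := b - a with hl
  have hl0 : 0 < l := by simp [hl]; linarith
  set I1 : ℝ := ∫ x in Ioo a b, |g x| with hI1
  have key : 0 ≤ ∫ x in Ioo a b, (|g x| - I1 / l) ^ 2 :=
    setIntegral_nonneg measurableSet_Ioo (fun x _ => sq_nonneg _)
  have hint1 : IntegrableOn (fun x => |g x|) (Ioo a b) :=
    (hg.abs.integrableOn_Icc (a := a) (b := b)).mono_set Ioo_subset_Icc_self
  have hexp : ∫ x in Ioo a b, (|g x| - I1 / l) ^ 2 =
      (∫ x in Ioo a b, g x ^ 2) - 2 * (I1 / l) * I1 + (I1 / l) ^ 2 * l := by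
    have e1 : ∀ x : ℝ, (|g x| - I1 / l) ^ 2 = g x ^ 2 - 2 * (I1 / l) * |g x| + (I1 / l) ^ 2 := by
      intro x; have := sq_abs (g x); ring_nf; nlinarith [sq_abs (g x)]
    simp_rw [e1]
    have hA : Integrable (fun x => g x ^ 2 - 2 * (I1 / l) * |g x|) (volume.restrict (Ioo a b)) := by
      exact ((contSqInt g hg a b)).sub (hint1.const_mul _)
    have hB : Integrable (fun _ : ℝ => (I1 / l) ^ 2) (volume.restrict (Ioo a b)) := by
      exact integrableOn_const measure_Ioo_lt_top.ne
    rw [integral_add hA hB, integral_sub (contSqInt g hg a b) (hint1.const_mul _),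
      MeasureTheory.integral_const_mul]
    have : ∫ _ in Ioo a b, (I1 / l) ^ 2 = (I1 / l) ^ 2 * l := by
      simp [Real.volume_Ioo, ENNReal.toReal_ofReal (by linarith : (0:ℝ) ≤ b - a), mul_comm, hl, hab.le]
    rw [this]
  rw [hexp] at key
  have : (I1 / l) ^ 2 * l = I1 ^ 2 / l := by field_simp
  rw [this] at key
  have h2 : 2 * (I1 / l) * I1 = 2 * I1 ^ 2 / l := by ring
  rw [h2] at key
  have h3 : 2 * I1 ^ 2 / l = I1 ^ 2 / l + I1 ^ 2 / l := by ring
  have : I1 ^ 2 / l ≤ ∫ x in Ioo a b, g x ^ 2 := by linarith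
  calc I1 ^ 2 = (I1 ^ 2 / l) * l := by field_simp
    _ ≤ (∫ x in Ioo a b, g x ^ 2) * l := by
        apply mul_le_mul_of_nonneg_right this hl0.le
    _ = l * ∫ x in Ioo a b, g x ^ 2 := mul_comm _ _

section stepA
variable {a b : ℝ} (v : ℝ → ℝ)

set_option maxHeartbeats 1000000 in
lemma stepA (hab : a < b) (hv : ContDiff ℝ 2 v) :
    ∫ x in Ioo a b, deriv v x ^ 2 ≤
      216 / (b - a) ^ 2 * (∫ x in Ioo a b, v x ^ 2)
        + 2 * (b - a) ^ 2 * ∫ x in Ioo a b, deriv (deriv v) x ^ 2 := by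
  have hl : 0 < b - a := by linarith
  set l : ℝ := b - a with hldef
  set E0 : ℝ := ∫ x in Ioo a b, v x ^ 2 with hE0def
  set E2 : ℝ := ∫ x in Ioo a b, deriv (deriv v) x ^ 2 with hE2def
  clear_value l E0 E2
  have hvc : Continuous v := hv.continuous
  have hd1 : Differentiable ℝ v := hv.differentiable (by norm_num)
  have hcd1 : ContDiff ℝ 1 (deriv v) := by
    have := (contDiff_succ_iff_deriv (n := 1)).1 (by exact_mod_cast hv)
    exact this.2.2
  have hd2 : Differentiable ℝ (deriv v) := hcd1.differentiable one_ne_zero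
  have hc1 : Continuous (deriv v) := hd2.continuous
  have hc2 : Continuous (deriv (deriv v)) := (contDiff_one_iff_deriv.1 hcd1).2
  -- point selection
  obtain ⟨p, hp, hpE⟩ := exists_small v hvc (a := a) (b := b)
    (show a < a + l / 3 by linarith)
    (Ioo_subset_Ioo le_rfl (by simp only [hldef]; linarith))
  obtain ⟨q, hq, hqE⟩ := exists_small v hvc (a := a) (b := b)
    (show b - l / 3 < b by linarith)
    (Ioo_subset_Ioo (by simp only [hldef]; linarith) le_rfl)
  have hpq : p < q := by
    rcases hp with ⟨hp1, hp2⟩; rcases hq with ⟨hq1, hq2⟩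
    have : a + l / 3 ≤ b - l / 3 := by simp [hldef]; linarith
    linarith
  have hqp : l / 3 < q - p := by
    rcases hp with ⟨hp1, hp2⟩; rcases hq with ⟨hq1, hq2⟩
    simp only [hldef] at *; linarith
  -- MVT
  obtain ⟨ξ, hξ, hξeq⟩ := exists_deriv_eq_slope v hpq (hvc.continuousOn)
    (hd1.differentiableOn)
  have hξab : ξ ∈ Ioo a b := ⟨by rcases hξ with ⟨h1, _⟩; rcases hp with ⟨h2,_⟩; linarith,
    by rcases hξ with ⟨_, h1⟩; rcases hq with ⟨_, h2⟩; linarith⟩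
  -- bound on |deriv v ξ|
  have hvp2 : v p ^ 2 * l ≤ 3 * E0 := by
    have h3 : (a + l / 3) - a = l / 3 := by ring
    rw [h3] at hpE
    have heq : v p ^ 2 * l = 3 * (v p ^ 2 * (l / 3)) := by ring
    rw [heq, hE0def]; linarith
  have hvq2 : v q ^ 2 * l ≤ 3 * E0 := by
    have h3 : b - (b - l / 3) = l / 3 := by ring
    rw [h3] at hqE
    have heq : v q ^ 2 * l = 3 * (v q ^ 2 * (l / 3)) := by ring
    rw [heq, hE0def]; linarith
  have hξb : |deriv v ξ| ≤ 3 / l * (|v p| + |v q|) := by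
    rw [hξeq, abs_div, abs_of_pos (by linarith : (0:ℝ) < q - p)]
    have h1 : |v q - v p| ≤ |v q| + |v p| := abs_sub _ _
    have h2 : l / 3 ≤ q - p := hqp.le
    calc |v q - v p| / (q - p) ≤ (|v q| + |v p|) / (l / 3) := by
          gcongr
      _ = 3 / l * (|v p| + |v q|) := by field_simp; ring
  set J : ℝ := ∫ x in Ioo a b, |deriv (deriv v) x| with hJdef
  have hJ0 : 0 ≤ J := by
    rw [hJdef]; exact setIntegral_nonneg measurableSet_Ioo (fun x _ => abs_nonneg _)
  have hE00 : 0 ≤ E0 := by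
    rw [hE0def]; exact setIntegral_nonneg measurableSet_Ioo (fun x _ => sq_nonneg _)
  have hE20 : 0 ≤ E2 := by
    rw [hE2def]; exact setIntegral_nonneg measurableSet_Ioo (fun x _ => sq_nonneg _)
  have hJ2 : J ^ 2 ≤ l * E2 := by
    have := cs_L1_L2 (fun x => deriv (deriv v) x) hc2 hab
    simpa [hldef, hE2def] using this
  have habs : IntegrableOn (fun x => |deriv (deriv v) x|) (Ioo a b) :=
    (hc2.abs.integrableOn_Icc (a := a) (b := b)).mono_set Ioo_subset_Icc_self
  clear_value J
  set S : ℝ := 3 / l * (|v p| + |v q|) + J with hSdef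
  have hS0 : 0 ≤ S := by positivity
  have hpt : ∀ x ∈ Ioo a b, |deriv v x| ≤ S := by
    intro x hx
    have hftc : ∫ t in ξ..x, deriv (deriv v) t = deriv v x - deriv v ξ :=
      intervalIntegral.integral_deriv_eq_sub (fun t _ => hd2 t) (hc2.intervalIntegrable _ _)
    have h1 : |deriv v x - deriv v ξ| ≤ J := by
      rw [← hftc]
      have h2 : |∫ t in ξ..x, deriv (deriv v) t| ≤ ∫ t in Set.uIoc ξ x, |deriv (deriv v) t| := by
        simpa [Real.norm_eq_abs] using
          (intervalIntegral.norm_integral_le_integral_norm_uIoc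
            (f := fun t => deriv (deriv v) t) (a := ξ) (b := x) (μ := volume))
      refine h2.trans ?_
      rw [Set.uIoc, integral_Ioc_eq_integral_Ioo, hJdef]
      refine setIntegral_mono_set habs ?_ ?_
      · filter_upwards with t using abs_nonneg _
      · apply HasSubset.Subset.eventuallyLE
        apply Ioo_subset_Ioo
        · simp only [le_inf_iff]
          exact ⟨hξab.1.le, hx.1.le⟩
        · simp only [sup_le_iff]
          exact ⟨hξab.2.le, hx.2.le⟩
    calc |deriv v x| ≤ |deriv v ξ| + |deriv v x - deriv v ξ| := by
          have := abs_add_le (deriv v ξ) (deriv v x - deriv v ξ)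
          simpa using this
      _ ≤ 3 / l * (|v p| + |v q|) + J := add_le_add hξb h1
  have hmono : ∫ x in Ioo a b, deriv v x ^ 2 ≤ S ^ 2 * l := by
    have h1 : ∫ x in Ioo a b, deriv v x ^ 2 ≤ ∫ _x in Ioo a b, S ^ 2 := by
      apply setIntegral_mono_on (contSqInt _ hc1 a b)
        (integrableOn_const measure_Ioo_lt_top.ne) measurableSet_Ioo
      intro x hx
      have h := abs_le.1 (hpt x hx)
      exact sq_le_sq' (by linarith [h.1]) h.2
    have h2 : ∫ _x in Ioo a b, S ^ 2 = S ^ 2 * l := by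
      simp [Real.volume_Ioo, ENNReal.toReal_ofReal (by linarith : (0:ℝ) ≤ b - a),
        mul_comm, hldef, hab.le]
    linarith [h1, h2.le, h2.ge]
  refine hmono.trans ?_
  have hA : (|v p| + |v q|) ^ 2 * l ≤ 12 * E0 := by
    nlinarith [sq_abs (v p), sq_abs (v q), sq_nonneg ((|v p| - |v q|) * Real.sqrt l),
      Real.sq_sqrt hl.le, Real.sqrt_nonneg l, hvp2, hvq2, hl]
  set t : ℝ := 3 / l * (|v p| + |v q|) with htdef
  have hT : t ^ 2 * l ^ 3 ≤ 108 * E0 := by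
    rw [htdef]
    have heq : (3 / l * (|v p| + |v q|)) ^ 2 * l ^ 3 = 9 * ((|v p| + |v q|) ^ 2 * l) := by
      field_simp; ring
    rw [heq]; linarith
  have ht0 : 0 ≤ t := by rw [htdef]; positivity
  clear_value t
  have hS2 : S ^ 2 ≤ 2 * t ^ 2 + 2 * J ^ 2 := by
    rw [hSdef]; nlinarith [sq_nonneg (t - J)]
  have h5 : S ^ 2 * l * l ^ 2 ≤ 216 * E0 + 2 * l ^ 4 * E2 := by
    nlinarith [mul_le_mul_of_nonneg_right hS2 (show (0:ℝ) ≤ l * l ^ 2 by positivity),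
      hT, mul_le_mul_of_nonneg_right hJ2 (show (0:ℝ) ≤ l ^ 3 by positivity)]
  have heq : 216 / l ^ 2 * E0 + 2 * l ^ 2 * E2 = (216 * E0 + 2 * l ^ 4 * E2) / l ^ 2 := by
    field_simp
  rw [heq, le_div_iff₀ (by positivity : (0:ℝ) < l ^ 2)]
  exact h5
end stepA

lemma ioo_add (f : ℝ → ℝ) (hf : Continuous f) {a c b : ℝ} (h1 : a ≤ c) (h2 : c ≤ b) :
    ∫ x in Ioo a b, f x = (∫ x in Ioo a c, f x) + ∫ x in Ioo c b, f x := by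
  rw [← integral_Ioc_eq_integral_Ioo, ← integral_Ioc_eq_integral_Ioo,
    ← integral_Ioc_eq_integral_Ioo,
    ← intervalIntegral.integral_of_le h1, ← intervalIntegral.integral_of_le h2,
    ← intervalIntegral.integral_of_le (h1.trans h2),
    ← intervalIntegral.integral_add_adjacent_intervals
      (hf.intervalIntegrable a c) (hf.intervalIntegrable c b)]

lemma partB (v : ℝ → ℝ) (hv : ContDiff ℝ 2 v) {L : ℝ} (hL : 0 < L) (N : ℕ) (hN : 0 < N) :
    ∫ x in Ioo 0 L, deriv v x ^ 2 ≤
      216 * (N / L) ^ 2 * (∫ x in Ioo 0 L, v x ^ 2)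
        + 2 * (L / N) ^ 2 * ∫ x in Ioo 0 L, deriv (deriv v) x ^ 2 := by
  have hvc : Continuous v := hv.continuous
  have hcd1 : ContDiff ℝ 1 (deriv v) := by
    have := (contDiff_succ_iff_deriv (n := 1)).1 (by exact_mod_cast hv)
    exact this.2.2
  have hc1 : Continuous (deriv v) := (hcd1.differentiable one_ne_zero).continuous
  have hc2 : Continuous (deriv (deriv v)) := (contDiff_one_iff_deriv.1 hcd1).2
  have hNR : (0:ℝ) < (N:ℝ) := by exact_mod_cast hN
  set l : ℝ := L / N with hldef
  have hl : 0 < l := by positivity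
  have key : ∀ n : ℕ, n ≤ N →
      ∫ x in Ioo 0 ((n:ℝ) * l), deriv v x ^ 2 ≤
        216 / l ^ 2 * (∫ x in Ioo 0 ((n:ℝ) * l), v x ^ 2)
          + 2 * l ^ 2 * ∫ x in Ioo 0 ((n:ℝ) * l), deriv (deriv v) x ^ 2 := by
    intro n hn
    induction n with
    | zero => simp
    | succ n ih =>
      have ih' := ih (le_of_lt (Nat.lt_of_succ_le hn))
      have hnl : (0:ℝ) ≤ (n:ℝ) * l := by positivity
      have hstep : (n:ℝ) * l < ((n+1:ℕ):ℝ) * l := by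
        push_cast; nlinarith
      have hA := stepA v hstep hv
      have hdiff : ((n+1:ℕ):ℝ) * l - (n:ℝ) * l = l := by push_cast; ring
      rw [hdiff] at hA
      have e1 := ioo_add (fun x => deriv v x ^ 2) (hc1.pow 2) hnl hstep.le
      have e2 := ioo_add (fun x => v x ^ 2) (hvc.pow 2) hnl hstep.le
      have e3 := ioo_add (fun x => deriv (deriv v) x ^ 2) (hc2.pow 2) hnl hstep.le
      rw [e1, e2, e3]
      have h0 : (0:ℝ) ≤ 216 / l ^ 2 := by positivity
      have h0' : (0:ℝ) ≤ 2 * l ^ 2 := by positivity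
      linarith [hA, ih']
  have hfin := key N le_rfl
  have hNl : (N:ℝ) * l = L := by rw [hldef]; field_simp
  rw [hNl] at hfin
  have heq : 216 / l ^ 2 = 216 * (N / L) ^ 2 := by
    rw [hldef]; field_simp
  rw [heq] at hfin
  exact hfin

lemma contDiff_iteratedDeriv {u : ℝ → ℝ} {m : ℕ} (hu : ContDiff ℝ m u) :
    ∀ j r : ℕ, j + r ≤ m → ContDiff ℝ r (iteratedDeriv j u) := by
  intro j
  induction j with
  | zero =>
    intro r hr
    have h : r ≤ m := by omega
    simpa using hu.of_le (by exact_mod_cast h)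
  | succ j ih =>
    intro r hr
    have h1 : ContDiff ℝ (r + 1) (iteratedDeriv j u) := ih (r + 1) (by omega)
    have h2 := (contDiff_succ_iff_deriv (n := r)).1 (by exact_mod_cast h1)
    rw [iteratedDeriv_succ]
    exact h2.2.2

lemma sqrt_add_le' (x y : ℝ) (hx : 0 ≤ x) (hy : 0 ≤ y) :
    Real.sqrt (x + y) ≤ Real.sqrt x + Real.sqrt y := by
  have h : x + y ≤ (Real.sqrt x + Real.sqrt y) ^ 2 := by
    nlinarith [Real.sq_sqrt hx, Real.sq_sqrt hy, Real.sqrt_nonneg x, Real.sqrt_nonneg y,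
      mul_nonneg (Real.sqrt_nonneg x) (Real.sqrt_nonneg y)]
  calc Real.sqrt (x + y) ≤ Real.sqrt ((Real.sqrt x + Real.sqrt y) ^ 2) := Real.sqrt_le_sqrt h
    _ = Real.sqrt x + Real.sqrt y := Real.sqrt_sq (by positivity)

lemma stepC {L : ℝ} (hL : 0 < L) {m : ℕ} (u : ℝ → ℝ) (hu : ContDiff ℝ m u)
    {j : ℕ} (hj : j + 2 ≤ m) {ε : ℝ} (hε0 : 0 < ε) (hε1 : ε ≤ 1) :
    Real.sqrt (∫ x in Ioo 0 L, iteratedDeriv (j+1) u x ^ 2) ≤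
      ε * Real.sqrt (∫ x in Ioo 0 L, iteratedDeriv (j+2) u x ^ 2)
        + (15 * (2 + 1 / L)) / ε * Real.sqrt (∫ x in Ioo 0 L, iteratedDeriv j u x ^ 2) := by
  set v : ℝ → ℝ := iteratedDeriv j u with hvdef
  have hv2 : ContDiff ℝ 2 v := contDiff_iteratedDeriv hu j 2 hj
  have hdv : deriv v = iteratedDeriv (j+1) u := (iteratedDeriv_succ).symm
  have hddv : deriv (deriv v) = iteratedDeriv (j+2) u := by
    rw [hdv]; exact (iteratedDeriv_succ).symm
  clear_value v
  set X0 : ℝ := ∫ x in Ioo 0 L, v x ^ 2 with hX0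
  set X1 : ℝ := ∫ x in Ioo 0 L, iteratedDeriv (j+1) u x ^ 2 with hX1
  set X2 : ℝ := ∫ x in Ioo 0 L, iteratedDeriv (j+2) u x ^ 2 with hX2
  have hX00 : 0 ≤ X0 := setIntegral_nonneg measurableSet_Ioo (fun x _ => sq_nonneg _)
  have hX10 : 0 ≤ X1 := setIntegral_nonneg measurableSet_Ioo (fun x _ => sq_nonneg _)
  have hX20 : 0 ≤ X2 := setIntegral_nonneg measurableSet_Ioo (fun x _ => sq_nonneg _)
  clear_value X0 X1 X2
  -- choose N
  set N : ℕ := ⌊2 * L / ε⌋₊ + 1 with hNdef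
  have hN0 : 0 < N := Nat.succ_pos _
  have hNlb : 2 * L / ε < (N : ℝ) := by
    rw [hNdef]; push_cast
    exact Nat.lt_floor_add_one _
  have hNub : (N : ℝ) ≤ 2 * L / ε + 1 := by
    rw [hNdef]; push_cast
    have := Nat.floor_le (by positivity : (0:ℝ) ≤ 2 * L / ε)
    linarith
  have hNR : (0:ℝ) < (N:ℝ) := by exact_mod_cast hN0
  clear_value N
  have hB := partB v hv2 hL N hN0
  rw [hddv, hdv] at hB
  rw [← hX0, ← hX1, ← hX2] at hB
  -- bounds on coefficients
  set C : ℝ := 15 * (2 + 1 / L) with hCdef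
  have hC0 : 0 < C := by rw [hCdef]; positivity
  clear_value C
  have hcoef1 : 216 * ((N:ℝ) / L) ^ 2 ≤ (C / ε) ^ 2 := by
    have h1 : (N:ℝ) / L ≤ (2 + 1 / L) / ε := by
      rw [div_le_div_iff₀ hL hε0]
      calc (N:ℝ) * ε ≤ (2 * L / ε + 1) * ε := by nlinarith
        _ = 2 * L + ε := by field_simp
        _ ≤ (2 + 1 / L) * L := by field_simp; nlinarith
    have h2 : (0:ℝ) ≤ (N:ℝ) / L := by positivity
    rw [hCdef]
    have hx : (0:ℝ) ≤ ((2 + 1 / L) / ε) ^ 2 := sq_nonneg _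
    calc 216 * ((N:ℝ) / L) ^ 2 ≤ 216 * ((2 + 1 / L) / ε) ^ 2 := by
          nlinarith [pow_le_pow_left₀ h2 h1 2]
      _ ≤ 225 * ((2 + 1 / L) / ε) ^ 2 := by linarith
      _ = (15 * (2 + 1 / L) / ε) ^ 2 := by ring
  have hcoef2 : 2 * (L / (N:ℝ)) ^ 2 ≤ ε ^ 2 := by
    have h1 : L / (N:ℝ) ≤ ε / 2 := by
      rw [div_le_div_iff₀ hNR (by norm_num : (0:ℝ) < 2)]
      have := (div_lt_iff₀ hε0).1 hNlb
      nlinarith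
    nlinarith [div_nonneg hL.le hNR.le]
  have hfinal : X1 ≤ (C / ε) ^ 2 * X0 + ε ^ 2 * X2 := by
    calc X1 ≤ 216 * ((N:ℝ) / L) ^ 2 * X0 + 2 * (L / (N:ℝ)) ^ 2 * X2 := hB
      _ ≤ (C / ε) ^ 2 * X0 + ε ^ 2 * X2 := by
          apply add_le_add
          · exact mul_le_mul_of_nonneg_right hcoef1 hX00
          · exact mul_le_mul_of_nonneg_right hcoef2 hX20
  calc Real.sqrt X1 ≤ Real.sqrt ((C / ε) ^ 2 * X0 + ε ^ 2 * X2) := Real.sqrt_le_sqrt hfinal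
    _ ≤ Real.sqrt ((C / ε) ^ 2 * X0) + Real.sqrt (ε ^ 2 * X2) :=
        sqrt_add_le' _ _ (by positivity) (by positivity)
    _ = C / ε * Real.sqrt X0 + ε * Real.sqrt X2 := by
        rw [Real.sqrt_mul (sq_nonneg _), Real.sqrt_mul (sq_nonneg _),
          Real.sqrt_sq (by positivity : (0:ℝ) ≤ C / ε), Real.sqrt_sq hε0.le]
    _ = ε * Real.sqrt X2 + C / ε * Real.sqrt X0 := by ring

lemma chainW (C : ℝ) (hC : 1 ≤ C) (m : ℕ) :
    ∀ k, 1 ≤ k → k + 1 ≤ m → ∃ A : ℝ, 1 ≤ A ∧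
      ∀ b : ℕ → ℝ, (∀ k, 0 ≤ b k) →
      (∀ k, 1 ≤ k → k + 1 ≤ m → ∀ ε : ℝ, 0 < ε → ε ≤ 1 →
        b k ≤ ε * b (k+1) + C / ε * b (k-1)) →
      ∀ ε : ℝ, 0 < ε → ε ≤ 1 →
      b k ≤ ε * b (k+1) + A / ε ^ k * b 0 := by
  intro k
  induction k with
  | zero => omega
  | succ k ih =>
    intro _ hk2
    rcases Nat.eq_zero_or_pos k with hk0 | hk1
    · subst hk0
      exact ⟨C, hC, fun b hb hstep ε hε0 hε1 => by
        simpa [pow_one] using hstep 1 le_rfl hk2 ε hε0 hε1⟩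
    · obtain ⟨A, hA1, hA⟩ := ih hk1 (by omega)
      refine ⟨4 * C * (4 * C) ^ k * A, ?_, ?_⟩
      · have h1 : (1:ℝ) ≤ 4 * C := by linarith
        have h2 : (1:ℝ) ≤ (4 * C) ^ k := one_le_pow₀ h1
        have h3 : (1:ℝ) ≤ 4 * C * (4 * C) ^ k := by nlinarith
        nlinarith [mul_le_mul h3 hA1 zero_le_one (le_trans zero_le_one h3)]
      intro b hb hstep ε hε0 hε1
      have hA' := hA b hb hstep
      have hC0 : 0 < C := by linarith
      have hδ0 : 0 < ε / 2 := by linarith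
      have hδ1 : ε / 2 ≤ 1 := by linarith
      have hε'0 : 0 < ε / (4 * C) := by positivity
      have hε'1 : ε / (4 * C) ≤ 1 := by
        rw [div_le_one (by linarith)]; linarith
      have h1 := hstep (k+1) (by omega) hk2 (ε / 2) hδ0 hδ1
      have h2 := hA' (ε / (4 * C)) hε'0 hε'1
      have h3 : C / (ε / 2) * b k ≤ C / (ε / 2) *
          ((ε / (4 * C)) * b (k+1) + A / (ε / (4 * C)) ^ k * b 0) :=
        mul_le_mul_of_nonneg_left h2 (by positivity)
      have heq1 : C / (ε / 2) * ((ε / (4 * C)) * b (k+1)) = 1 / 2 * b (k+1) := by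
        field_simp
        ring
      have heq2 : C / (ε / 2) * (A / (ε / (4 * C)) ^ k * b 0)
          = (4 * C * (4 * C) ^ k * A) / (2 * ε ^ (k+1)) * b 0 := by
        rw [div_pow]
        field_simp
        ring
      have hb2 : 0 ≤ b 0 := hb 0
      have hfin : b (k+1) ≤ ε / 2 * b (k+2) + 1 / 2 * b (k+1)
          + (4 * C * (4 * C) ^ k * A) / (2 * ε ^ (k+1)) * b 0 := by
        rw [mul_add, heq1, heq2] at h3
        calc b (k+1) ≤ ε / 2 * b (k+2) + C / (ε / 2) * b k := by
              simpa using h1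
          _ ≤ ε / 2 * b (k+2) + (1 / 2 * b (k+1)
              + (4 * C * (4 * C) ^ k * A) / (2 * ε ^ (k+1)) * b 0) := by linarith
          _ = _ := by ring
      have hhalf : (4 * C * (4 * C) ^ k * A) / (2 * ε ^ (k+1)) * b 0 * 2
          = (4 * C * (4 * C) ^ k * A) / ε ^ (k+1) * b 0 := by
        field_simp
      nlinarith [hfin, hhalf]

lemma chainU (C : ℝ) (hC : 1 ≤ C) (m : ℕ) :
    ∀ k, k ≤ m → ∃ A : ℝ, 1 ≤ A ∧
      ∀ b : ℕ → ℝ, (∀ k, 0 ≤ b k) →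
      (∀ k, 1 ≤ k → k + 1 ≤ m → ∀ ε : ℝ, 0 < ε → ε ≤ 1 →
        b k ≤ ε * b (k+1) + C / ε * b (k-1)) →
      ∀ ε : ℝ, 0 < ε → ε ≤ 1 →
      b k ≤ ε ^ (m - k) * b m + A / ε ^ k * b 0 := by
  suffices h : ∀ d k, k + d = m → ∃ A : ℝ, 1 ≤ A ∧
      ∀ b : ℕ → ℝ, (∀ k, 0 ≤ b k) →
      (∀ k, 1 ≤ k → k + 1 ≤ m → ∀ ε : ℝ, 0 < ε → ε ≤ 1 →
        b k ≤ ε * b (k+1) + C / ε * b (k-1)) →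
      ∀ ε : ℝ, 0 < ε → ε ≤ 1 →
      b k ≤ ε ^ (m - k) * b m + A / ε ^ k * b 0 by
    intro k hk; exact h (m - k) k (by omega)
  intro d
  induction d with
  | zero =>
    intro k hk
    refine ⟨1, le_rfl, fun b hb hstep ε hε0 hε1 => ?_⟩
    have : k = m := by omega
    subst this
    simp only [Nat.sub_self, pow_zero, one_mul]
    have : 0 ≤ 1 / ε ^ k * b 0 := mul_nonneg (by positivity) (hb 0)
    linarith [hb k]
  | succ d ihd =>
    intro k hk
    rcases Nat.eq_zero_or_pos k with hk0 | hk1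
    · subst hk0
      refine ⟨1, le_rfl, fun b hb hstep ε hε0 hε1 => ?_⟩
      have h1 : 0 ≤ ε ^ (m - 0) * b m := mul_nonneg (by positivity) (hb m)
      simp only [pow_zero]
      have hb0 := hb 0
      nlinarith
    · obtain ⟨AW, hAW1, hAW⟩ := chainW C hC m k hk1 (by omega)
      obtain ⟨AU, hAU1, hAU⟩ := ihd (k+1) (by omega)
      refine ⟨AU + AW, by linarith, fun b hb hstep ε hε0 hε1 => ?_⟩
      have h1 := hAW b hb hstep ε hε0 hε1
      have h2 := hAU b hb hstep ε hε0 hε1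
      have h3 : b k ≤ ε * (ε ^ (m - (k+1)) * b m + AU / ε ^ (k+1) * b 0)
          + AW / ε ^ k * b 0 := by
        have := mul_le_mul_of_nonneg_left h2 hε0.le
        linarith
      have e1 : ε * (ε ^ (m - (k+1)) * b m) = ε ^ (m - k) * b m := by
        rw [← mul_assoc, ← pow_succ']
        congr 2
        omega
      have e2 : ε * (AU / ε ^ (k+1) * b 0) = AU / ε ^ k * b 0 := by
        rw [pow_succ]
        field_simp
      have e3 : (AU + AW) / ε ^ k * b 0 = AU / ε ^ k * b 0 + AW / ε ^ k * b 0 := by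
        ring
      rw [mul_add, e1, e2] at h3
      rw [e3]
      linarith

/-- Gagliardo–Nirenberg interpolation of intermediate derivatives on `(0,L)`:
`‖Dⁱu‖ ≤ A₁ ‖Dᵐu‖^{i/m} ‖u‖^{1-i/m} + A₂ ‖u‖`, with `A₁, A₂` depending only on
`L`, `m`, `i`. -/
theorem interpolation_intermediate_derivatives (L : ℝ) (hL : 0 < L) (m i : ℕ)
    (hm : 0 < m) (hi : i < m) :
    ∃ A₁ A₂ : ℝ, 0 < A₁ ∧ 0 < A₂ ∧
      ∀ u : ℝ → ℝ, ContDiff ℝ m u →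
        Real.sqrt (∫ x in Ioo 0 L, (iteratedDeriv i u x) ^ 2) ≤
          A₁ * (Real.sqrt (∫ x in Ioo 0 L, (iteratedDeriv m u x) ^ 2)) ^ ((i : ℝ) / m)
              * (Real.sqrt (∫ x in Ioo 0 L, (u x) ^ 2)) ^ (1 - (i : ℝ) / m)
            + A₂ * Real.sqrt (∫ x in Ioo 0 L, (u x) ^ 2) := by
  rcases Nat.eq_zero_or_pos i with hi0 | hi1
  · subst hi0
    refine ⟨1, 1, one_pos, one_pos, fun u hu => ?_⟩
    simp only [Nat.cast_zero, zero_div, Real.rpow_zero, sub_zero, Real.rpow_one,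
      iteratedDeriv_zero, one_mul, mul_one]
    linarith [Real.sqrt_nonneg (∫ x in Ioo 0 L, u x ^ 2)]
  · have hC1 : (1:ℝ) ≤ 15 * (2 + 1 / L) := by
      have h : (0:ℝ) < 1 / L := by positivity
      nlinarith
    obtain ⟨A, hA1, hA⟩ := chainU (15 * (2 + 1 / L)) hC1 m i hi.le
    refine ⟨1 + A, A, by linarith, by linarith, fun u hu => ?_⟩
    set P : ℝ := Real.sqrt (∫ x in Ioo 0 L, iteratedDeriv m u x ^ 2) with hPdef
    set Q : ℝ := Real.sqrt (∫ x in Ioo 0 L, u x ^ 2) with hQdef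
    set bi : ℝ := Real.sqrt (∫ x in Ioo 0 L, iteratedDeriv i u x ^ 2) with hbidef
    have hP0 : 0 ≤ P := Real.sqrt_nonneg _
    have hQ0 : 0 ≤ Q := Real.sqrt_nonneg _
    have hbi0 : 0 ≤ bi := Real.sqrt_nonneg _
    have key : ∀ ε : ℝ, 0 < ε → ε ≤ 1 → bi ≤ ε ^ (m - i) * P + A / ε ^ i * Q := by
      intro ε hε0 hε1
      have hb : ∀ k, 0 ≤ (fun k => Real.sqrt (∫ x in Ioo 0 L, iteratedDeriv k u x ^ 2)) k :=
        fun k => Real.sqrt_nonneg _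
      have hstep : ∀ k, 1 ≤ k → k + 1 ≤ m → ∀ ε : ℝ, 0 < ε → ε ≤ 1 →
          (fun k => Real.sqrt (∫ x in Ioo 0 L, iteratedDeriv k u x ^ 2)) k ≤
            ε * (fun k => Real.sqrt (∫ x in Ioo 0 L, iteratedDeriv k u x ^ 2)) (k+1)
              + (15 * (2 + 1 / L)) / ε *
                (fun k => Real.sqrt (∫ x in Ioo 0 L, iteratedDeriv k u x ^ 2)) (k-1) := by
        intro k hk1 hk2 ε' hε'0 hε'1
        obtain ⟨j, rfl⟩ : ∃ j, k = j + 1 := ⟨k - 1, by omega⟩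
        simpa using stepC hL u hu (j := j) (by omega) hε'0 hε'1
      have h := hA _ hb hstep ε hε0 hε1
      simpa [hPdef, hQdef, hbidef] using h
    -- now the optimization
    have hmpos : (0:ℝ) < m := by exact_mod_cast hm
    have hθ0 : 0 < (i:ℝ) / m := div_pos (by exact_mod_cast hi1) hmpos
    have hθ1 : (i:ℝ) / m < 1 := by rw [div_lt_one hmpos]; exact_mod_cast hi
    set θ : ℝ := (i:ℝ) / m with hθdef
    show bi ≤ (1 + A) * P ^ θ * Q ^ (1 - θ) + A * Q
    rcases le_or_gt P Q with hPQ | hQP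
    · have h1 := key 1 one_pos le_rfl
      simp only [one_pow, one_mul, div_one] at h1
      have h2 : P ≤ P ^ θ * Q ^ (1 - θ) := by
        rcases eq_or_lt_of_le hP0 with hPz | hPp
        · rw [← hPz]
          exact mul_nonneg (Real.rpow_nonneg le_rfl _) (Real.rpow_nonneg hQ0 _)
        · have hQp : 0 < Q := lt_of_lt_of_le hPp hPQ
          calc P = P ^ θ * P ^ (1 - θ) := by
                rw [← Real.rpow_add hPp]; norm_num
            _ ≤ P ^ θ * Q ^ (1 - θ) :=
                mul_le_mul_of_nonneg_left
                  (Real.rpow_le_rpow hPp.le hPQ (by linarith)) (Real.rpow_nonneg hPp.le _)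
      have h3 : 0 ≤ P ^ θ * Q ^ (1 - θ) :=
        mul_nonneg (Real.rpow_nonneg hP0 _) (Real.rpow_nonneg hQ0 _)
      nlinarith [mul_nonneg (by linarith : (0:ℝ) ≤ A) h3]
    · rcases eq_or_lt_of_le hQ0 with hQz | hQp
      · -- Q = 0
        have hPp : 0 < P := lt_of_le_of_lt hQ0 hQP
        have hble : bi ≤ 0 := by
          by_contra hpos
          push_neg at hpos
          have hε0 : 0 < min 1 (bi / (2 * P)) := lt_min one_pos (by positivity)
          have hε1 : min 1 (bi / (2 * P)) ≤ 1 := min_le_left _ _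
          have h1 := key _ hε0 hε1
          rw [← hQz] at h1
          have h2 : min 1 (bi / (2 * P)) ^ (m - i) ≤ min 1 (bi / (2 * P)) :=
            pow_le_of_le_one hε0.le hε1 (by omega)
          have h3 : min 1 (bi / (2 * P)) ≤ bi / (2 * P) := min_le_right _ _
          have h4 : bi ≤ (bi / (2 * P)) * P := by
            calc bi ≤ min 1 (bi / (2 * P)) ^ (m - i) * P + A / min 1 (bi / (2 * P)) ^ i * 0 := h1
              _ = min 1 (bi / (2 * P)) ^ (m - i) * P := by ring
              _ ≤ (bi / (2 * P)) * P :=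
                  mul_le_mul_of_nonneg_right (le_trans h2 h3) hPp.le
          have h5 : (bi / (2 * P)) * P = bi / 2 := by field_simp
          linarith
        have hbieq : bi = 0 := le_antisymm hble hbi0
        rw [hbieq, ← hQz, Real.zero_rpow (by linarith : 1 - θ ≠ 0)]
        simp
      · -- 0 < Q < P
        have hPp : 0 < P := lt_trans hQp hQP
        have hbase : 0 < Q / P := div_pos hQp hPp
        set ε : ℝ := (Q / P) ^ ((1:ℝ) / m) with hεdef
        have hε0 : 0 < ε := Real.rpow_pos_of_pos hbase _
        have hε1 : ε ≤ 1 :=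
          Real.rpow_le_one hbase.le (by rw [div_le_one hPp]; exact hQP.le) (by positivity)
        have h1 := key ε hε0 hε1
        have e1 : ε ^ (m - i) = (Q / P) ^ (1 - θ) := by
          rw [hεdef, ← Real.rpow_natCast ((Q / P) ^ ((1:ℝ)/m)) (m - i),
            ← Real.rpow_mul hbase.le]
          congr 1
          rw [Nat.cast_sub hi.le, hθdef]
          field_simp
        have e2 : ε ^ i = (Q / P) ^ θ := by
          rw [hεdef, ← Real.rpow_natCast ((Q / P) ^ ((1:ℝ)/m)) i,
            ← Real.rpow_mul hbase.le]
          congr 1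
          rw [hθdef]
          field_simp
        have hPne : P ^ (1 - θ) ≠ 0 := ne_of_gt (Real.rpow_pos_of_pos hPp _)
        have hQne : Q ^ θ ≠ 0 := ne_of_gt (Real.rpow_pos_of_pos hQp _)
        have hPθ : P ^ θ * P ^ (1 - θ) = P := by
          rw [← Real.rpow_add hPp]; norm_num
        have hQθ : Q ^ θ * Q ^ (1 - θ) = Q := by
          rw [← Real.rpow_add hQp]; norm_num
        have key1 : ε ^ (m - i) * P = P ^ θ * Q ^ (1 - θ) := by
          rw [e1, Real.div_rpow hQp.le hPp.le]
          field_simp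
          linear_combination -hPθ
        have key2 : A / ε ^ i * Q = A * (P ^ θ * Q ^ (1 - θ)) := by
          rw [e2, Real.div_rpow hQp.le hPp.le]
          field_simp
          linear_combination -hQθ
        rw [key1, key2] at h1
        nlinarith [h1]
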